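/- Let R be a commutative ring with involution * and let q ∈ M_n(R) be an idempotent with Tr(q)=1 and all 2×2 minors vanishing. For a ∈ M_n(R) with qa + aq = a, define L_q(a) = 2Tr(q†q)[a†, q] + Tr(a†q)[q, q†], where † is conjugate-transpose. Then L_q(a) satisfies q L_q(a) + L_q(a) q = L_q(a), and L_q²(a) = −4 Tr(q†q)³ a. -/

import Mathlib

open Matrix

/-- The matrix operator `L_q(a) = 2 Tr(q†q)[a†,q] + Tr(a†q)[q,q†]`. -/
def LqMat {R : Type*} [CommRing R] [StarRing R] {n : ℕ}
    (q a : Matrix (Fin n) (Fin n) R) : Matrix (Fin n) (Fin n) R :=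
  (2 * (qᴴ * q).trace) • (aᴴ * q - q * aᴴ) +
    (aᴴ * q).trace • (q * qᴴ - qᴴ * q)

lemma collapse_aux {R : Type*} [CommRing R] {n : ℕ}
    (q : Matrix (Fin n) (Fin n) R)
    (hminor : ∀ i j k l, q i k * q j l = q i l * q j k)
    (x : Matrix (Fin n) (Fin n) R) :
    q * (x * q) = (x * q).trace • q := by
  rw [← mul_assoc]
  ext i l
  simp only [mul_apply, trace, diag_apply, Matrix.smul_apply, smul_eq_mul,
    Finset.sum_mul, Finset.mul_sum]
  rw [Finset.sum_comm]
  refine Finset.sum_congr rfl fun m _ => Finset.sum_congr rfl fun k _ => ?_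
  linear_combination x m k * hminor i k m l

/-- for an idempotent `q` with `Tr q = 1` and vanishing 2×2
minors, and a tangent vector `a` at `q`, `L_q(a)` is tangent at `q` and
`L_q²(a) = −4 Tr(q†q)³ a`. -/
theorem stmt_13 {R : Type*} [CommRing R] [StarRing R] {n : ℕ}
    (q a : Matrix (Fin n) (Fin n) R)
    (hq : q * q = q) (htr : q.trace = 1)
    (hminor : ∀ i j k l, q i k * q j l = q i l * q j k)
    (ha : q * a + a * q = a) :
    q * LqMat q a + LqMat q a * q = LqMat q a ∧
      LqMat q (LqMat q a) = (-(4 * (qᴴ * q).trace ^ 3)) • a := by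
  constructor
  · have hqqX : ∀ X : Matrix (Fin n) (Fin n) R, q * (q * X) = q * X := fun X => by
      rw [← mul_assoc, hq]
    have hXqq : ∀ X : Matrix (Fin n) (Fin n) R, X * q * q = X * q := fun X => by
      rw [mul_assoc, hq]
    simp only [LqMat, mul_add, add_mul, mul_smul_comm, smul_mul_assoc, mul_sub, sub_mul,
      hqqX, hXqq, ← mul_assoc]
    module
  · have hminor' : ∀ i j k l, qᴴ i k * qᴴ j l = qᴴ i l * qᴴ j k := by
      intro i j k l
      simp only [conjTranspose_apply, ← star_mul']
      exact congrArg star ((hminor k l i j).trans (mul_comm _ _))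
    have hcol := collapse_aux q hminor
    have hcol' := collapse_aux qᴴ hminor'
    set τ := (qᴴ * q).trace with hτ
    set α := (qᴴ * a * q).trace with hα
    set β := (a * qᴴ * q).trace with hβ
    have hqaq : q * (a * q) = 0 := by
      have h : q * (q * a + a * q) = q * a := by rw [ha]
      rw [mul_add, ← mul_assoc q q a, hq] at h
      exact add_eq_left.mp h
    have h3 : q * (qᴴ * q) = τ • q := hcol qᴴ
    have hqq2 : q * (q * qᴴ) = q * qᴴ := by rw [← mul_assoc, hq]
    have hpqp : qᴴ * (q * qᴴ) = τ • qᴴ := by rw [hcol' q, trace_mul_comm]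
    have h1 : a * (qᴴ * q) = β • q + τ • (a * q) := by
      conv_lhs => rw [← ha, add_mul, mul_assoc q a (qᴴ * q), ← mul_assoc a qᴴ q,
        mul_assoc a q (qᴴ * q), h3]
      rw [hcol (a * qᴴ), mul_smul_comm, hβ, mul_assoc]
    have h2 : q * (qᴴ * a) = τ • (q * a) + α • q := by
      conv_lhs => rw [← ha]
      rw [mul_add, mul_add, ← mul_assoc qᴴ q a, ← mul_assoc q (qᴴ * q) a, h3,
        smul_mul_assoc, ← mul_assoc qᴴ a q, hcol (qᴴ * a), ← hα]
    have S4 : τ • (qᴴ * (a * q)) = α • (qᴴ * q) := by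
      calc τ • (qᴴ * (a * q)) = (τ • qᴴ) * (a * q) := by rw [smul_mul_assoc]
      _ = qᴴ * (q * qᴴ) * (a * q) := by rw [hpqp]
      _ = qᴴ * (q * (qᴴ * a) * q) := by noncomm_ring
      _ = qᴴ * ((τ • (q * a) + α • q) * q) := by rw [h2]
      _ = τ • (qᴴ * (q * (a * q))) + α • (qᴴ * (q * q)) := by noncomm_ring
      _ = α • (qᴴ * q) := by rw [hqaq, hq, mul_zero, smul_zero, zero_add]
    have S5 : τ • (q * (a * qᴴ)) = β • (q * qᴴ) := by
      calc τ • (q * (a * qᴴ)) = q * (a * (τ • qᴴ)) := by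
            rw [mul_smul_comm, mul_smul_comm]
      _ = q * (a * (qᴴ * (q * qᴴ))) := by rw [hpqp]
      _ = q * ((a * (qᴴ * q)) * qᴴ) := by noncomm_ring
      _ = q * ((β • q + τ • (a * q)) * qᴴ) := by rw [h1]
      _ = β • (q * (q * qᴴ)) + τ • (q * (a * q) * qᴴ) := by noncomm_ring
      _ = β • (q * qᴴ) := by rw [hqaq, zero_mul, smul_zero, add_zero, hqq2]
    have hstarτ : star τ = τ := by
      rw [hτ, ← trace_conjTranspose, conjTranspose_mul, conjTranspose_conjTranspose]
    have t1 : (qᴴ * (q * a)).trace = β := by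
      rw [trace_mul_comm qᴴ (q * a), mul_assoc q a qᴴ, trace_mul_comm q (a * qᴴ), ← hβ]
    have t2 : (qᴴ * (a * q)).trace = α := by
      rw [← mul_assoc, ← hα]
    have S6 : star ((aᴴ * q).trace) = α + β := by
      rw [← trace_conjTranspose, conjTranspose_mul, conjTranspose_conjTranspose]
      conv_lhs => rw [← ha, mul_add, trace_add]
      rw [t1, t2, add_comm]
    have hch : (LqMat q a)ᴴ = (2 * τ) • (qᴴ * a - a * qᴴ) + (α + β) • (q * qᴴ - qᴴ * q) := by
      simp only [LqMat, conjTranspose_add, conjTranspose_smul, conjTranspose_sub,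
        conjTranspose_mul, conjTranspose_conjTranspose, star_mul', ← hτ, hstarτ, S6,
        star_ofNat]
    have hE : ((LqMat q a)ᴴ * q).trace = 2 * τ * (α - β) := by
      rw [hch]
      simp only [add_mul, sub_mul, smul_mul_assoc, trace_add, trace_smul, trace_sub,
        mul_assoc, h3, hq, trace_smul, smul_eq_mul, htr]
      rw [show (qᴴ * (a * q)).trace = α from by rw [hα, mul_assoc],
        show (a * (qᴴ * q)).trace = β from by rw [hβ, mul_assoc], ← hτ]
      ring
    rw [show LqMat q (LqMat q a) = (2 * τ) • ((LqMat q a)ᴴ * q - q * (LqMat q a)ᴴ)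
        + ((LqMat q a)ᴴ * q).trace • (q * qᴴ - qᴴ * q) from rfl, hE, hch]
    simp only [add_mul, mul_add, sub_mul, mul_sub, smul_mul_assoc, mul_smul_comm,
      smul_add, smul_sub, mul_assoc]
    simp only [h1, h2, h3, hqq2, hqaq, hq]
    linear_combination (norm := module) (4 * τ) • S4 + (4 * τ) • S5 + (-(4 * τ^3)) • ha
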